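/- arXiv:1911.00403 — 2 statements merged into one kernel-verified Lean document; each statement's English description precedes it below -/
import Mathlib

section
/- Let n ≥ 2, let Φ be a partial injective function from [n] to [n−1], let i ∈ [n] with i not in the domain of Φ, and let j ∈ [n−1] with j not in the range of Φ. Then the number of bijections σ from [n]∖{i} onto [n−1] that extend Φ equals the number of bijections τ from [n]∖{k} onto [n−1], taken over all k ∈ [n] with k ≠ i, that extend Φ and satisfy τ(i) = j. -/
/-- `P` is a maximal partial matching of the `n` pigeons into the `n−1` holes leaving
exactly pigeon `i` unmatched: `P i = none`, every other pigeon is matched, and no two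
pigeons share a hole. -/
def MatchExcept (n : ℕ) (P : Fin n → Option (Fin (n - 1))) (i : Fin n) : Prop :=
  P i = none ∧ (∀ x, x ≠ i → (P x).isSome) ∧
    ∀ x y a, P x = some a → P y = some a → x = y

/-- `P` extends the partial injective function `Φ`. -/
def ExtendsFn (n : ℕ) (Φ P : Fin n → Option (Fin (n - 1))) : Prop :=
  ∀ x a, Φ x = some a → P x = some a

/-- Pigeonhole: a maximal partial matching hits every hole. -/
lemma matchExcept_surj (n : ℕ) (hn : 2 ≤ n) (P : Fin n → Option (Fin (n - 1)))
    (i : Fin n) (hP : MatchExcept n P i) (j : Fin (n - 1)) :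
    ∃ x, x ≠ i ∧ P x = some j := by
  obtain ⟨h0, h1, h2⟩ := hP
  let e : {x : Fin n // x ≠ i} → Fin (n - 1) :=
    fun x => (P x.1).get (h1 x.1 x.2)
  have hinj : Function.Injective e := by
    intro x y hxy
    have hx : P x.1 = some (e x) := Option.eq_some_of_isSome (h1 x.1 x.2)
    have hy : P y.1 = some (e y) := Option.eq_some_of_isSome (h1 y.1 y.2)
    exact Subtype.ext (h2 x.1 y.1 (e x) hx (hxy ▸ hy))
  have hcard : Fintype.card {x : Fin n // x ≠ i} = Fintype.card (Fin (n - 1)) := by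
    simp [Fintype.card_subtype_compl, Fintype.card_fin]
  have hsurj : Function.Surjective e :=
    ((Fintype.bijective_iff_injective_and_card e).2 ⟨hinj, hcard⟩).2
  obtain ⟨x, hx⟩ := hsurj j
  refine ⟨x.1, x.2, ?_⟩
  have : P x.1 = some (e x) := Option.eq_some_of_isSome (h1 x.1 x.2)
  rw [this, hx]

/-- Let `Φ` be a partial injective function from `[n]` to `[n−1]`, let `i` be outside
the domain of `Φ` and `j` outside its range. Then the number of bijections from
`[n]∖{i}` onto `[n−1]` extending `Φ` equals the number of bijections from `[n]∖{k}`
onto `[n−1]` (over all `k ≠ i`) extending `Φ` and sending `i` to `j`. -/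
theorem matchings_bijection_count (n : ℕ) (hn : 2 ≤ n)
    (Φ : Fin n → Option (Fin (n - 1)))
    (hΦ : ∀ x y a, Φ x = some a → Φ y = some a → x = y)
    (i : Fin n) (hi : Φ i = none) (j : Fin (n - 1)) (hj : ∀ x, Φ x ≠ some j) :
    {P : Fin n → Option (Fin (n - 1)) | MatchExcept n P i ∧ ExtendsFn n Φ P}.ncard =
    {P : Fin n → Option (Fin (n - 1)) |
        (∃ k, k ≠ i ∧ MatchExcept n P k) ∧ ExtendsFn n Φ P ∧ P i = some j}.ncard := by
  classical
  set S := {P : Fin n → Option (Fin (n - 1)) | MatchExcept n P i ∧ ExtendsFn n Φ P} with hS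
  set T := {P : Fin n → Option (Fin (n - 1)) |
      (∃ k, k ≠ i ∧ MatchExcept n P k) ∧ ExtendsFn n Φ P ∧ P i = some j} with hT
  let f : (Fin n → Option (Fin (n - 1))) → (Fin n → Option (Fin (n - 1))) :=
    fun P x => if x = i then some j else if P x = some j then none else P x
  let g : (Fin n → Option (Fin (n - 1))) → (Fin n → Option (Fin (n - 1))) :=
    fun Q x => if x = i then none else if Q x = none then some j else Q x
  -- f maps S into T
  have hmapsto : ∀ P ∈ S, f P ∈ T := by
    rintro P ⟨hM, hE⟩
    obtain ⟨h0, h1, h2⟩ := hM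
    obtain ⟨x₀, hx₀i, hx₀⟩ := matchExcept_surj n hn P i ⟨h0, h1, h2⟩ j
    refine ⟨⟨x₀, hx₀i, ?_, ?_, ?_⟩, ?_, ?_⟩
    · simp [f, hx₀i, hx₀]
    · intro x hx
      by_cases hxi : x = i
      · simp [f, hxi]
      · have hxj : P x ≠ some j := fun h => hx (h2 x x₀ j h hx₀)
        simp only [f, if_neg hxi, if_neg hxj]
        exact h1 x hxi
    · intro x y a hx hy
      by_cases hxi : x = i
      · by_cases hyi : y = i
        · rw [hxi, hyi]
        · simp only [f, if_pos hxi] at hx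
          simp only [f, if_neg hyi] at hy
          by_cases hyj : P y = some j
          · simp [hyj] at hy
          · rw [if_neg hyj] at hy
            exact absurd (h2 y x₀ j (by rw [hy, ← hx]) hx₀ ▸ hyj) (by
              rw [← hx] at hy
              exact fun _ => hyj (hy.trans (congrArg some rfl)) )
      · by_cases hyi : y = i
        · simp only [f, if_pos hyi] at hy
          simp only [f, if_neg hxi] at hx
          by_cases hxj : P x = some j
          · simp [hxj] at hx
          · rw [if_neg hxj] at hx
            rw [← hy] at hx
            exact absurd hx hxj
        · simp only [f, if_neg hxi] at hx
          simp only [f, if_neg hyi] at hy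
          by_cases hxj : P x = some j
          · simp [hxj] at hx
          · by_cases hyj : P y = some j
            · simp [hyj] at hy
            · rw [if_neg hxj] at hx
              rw [if_neg hyj] at hy
              exact h2 x y a hx hy
    · intro x a ha
      have hxi : x ≠ i := fun h => by rw [h, hi] at ha; exact Option.some_ne_none a ha.symm
      have hPx : P x = some a := hE x a ha
      have haj : a ≠ j := fun h => hj x (h ▸ ha)
      simp [f, hxi, hPx, haj]
    · simp [f]
  -- g ∘ f = id on S
  have hgf : ∀ P ∈ S, g (f P) = P := by
    rintro P ⟨⟨h0, h1, h2⟩, hE⟩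
    funext x
    by_cases hxi : x = i
    · simp [g, hxi, h0]
    · have hPx := h1 x hxi
      by_cases hxj : P x = some j
      · simp [g, f, hxi, hxj]
      · have : f P x = P x := by simp [f, hxi, hxj]
        simp only [g, if_neg hxi, this]
        rw [if_neg (Option.isSome_iff_ne_none.1 hPx)]
  -- f ∘ g = id on T, and g maps T into S
  have hfg : ∀ Q ∈ T, g Q ∈ S ∧ f (g Q) = Q := by
    rintro Q ⟨⟨k, hki, hk0, hk1, hk2⟩, hE, hQi⟩
    constructor
    · refine ⟨⟨by simp [g], ?_, ?_⟩, ?_⟩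
      · intro x hx
        by_cases hxn : Q x = none
        · simp [g, hx, hxn]
        · simp [g, hx, hxn, Option.isSome_iff_ne_none]
      · intro x y a hx hy
        have hxi : x ≠ i := fun h => by simp [g, h] at hx
        have hyi : y ≠ i := fun h => by simp [g, h] at hy
        simp only [g, if_neg hxi] at hx
        simp only [g, if_neg hyi] at hy
        by_cases hxn : Q x = none
        · have hxk : x = k := by
            by_contra hxk
            exact (Option.isSome_iff_ne_none.1 (hk1 x hxk)) hxn
          by_cases hyn : Q y = none
          · have hyk : y = k := by
              by_contra hyk
              exact (Option.isSome_iff_ne_none.1 (hk1 y hyk)) hyn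
            rw [hxk, hyk]
          · rw [if_pos hxn] at hx
            rw [if_neg hyn] at hy
            have : Q y = some j := by rw [hy, ← hx]
            exact absurd (hk2 y i j this hQi) hyi
        · rw [if_neg hxn] at hx
          by_cases hyn : Q y = none
          · rw [if_pos hyn] at hy
            have : Q x = some j := by rw [hx, hy]
            exact absurd (hk2 x i j this hQi) hxi
          · rw [if_neg hyn] at hy
            exact hk2 x y a hx hy
      · intro x a ha
        have hxi : x ≠ i := fun h => by rw [h, hi] at ha; exact Option.some_ne_none a ha.symm
        have hQx : Q x = some a := hE x a ha
        simp [g, hxi, hQx]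
    · funext x
      by_cases hxi : x = i
      · simp [f, hxi, hQi]
      · by_cases hxn : Q x = none
        · have : g Q x = some j := by simp [g, hxi, hxn]
          simp [f, hxi, this, hxn]
        · have hxj : Q x ≠ some j := fun h => hxi (hk2 x i j h hQi)
          have : g Q x = Q x := by simp [g, hxi, hxn]
          simp only [f, if_neg hxi, this, if_neg hxj]
  have hinj : Set.InjOn f S := fun P hP Q hQ h => by
    rw [← hgf P hP, ← hgf Q hQ, h]
  have himg : f '' S = T := by
    apply Set.Subset.antisymm
    · rintro _ ⟨P, hP, rfl⟩
      exact hmapsto P hP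
    · intro Q hQ
      exact ⟨g Q, (hfg Q hQ).1, (hfg Q hQ).2⟩
  calc S.ncard = (f '' S).ncard := (Set.ncard_image_of_injOn hinj).symm
    _ = T.ncard := by rw [himg]
end

section
/- Let n ≥ 3. There exists a function v from terms of at most n−2 literals over the variables {P_{i,j} : i ∈ [n], j ∈ [n−1]} to ℝ such that v(⊤) = 1 and, for every term D of at most n−3 literals: (i) for every variable P_{i,j} not occurring in D, v(D∧P_{i,j}) + v(D∧¬P_{i,j}) = v(D); (ii) for every literal l, 0 ≤ v(D∧l) ≤ v(D); (iii) for all distinct pigeons i ≠ i' ∈ [n] and every hole j ∈ [n−1], v(D∧¬P_{i,j}) + v(D∧¬P_{i',j}) ≥ v(D); and (iv) for every pigeon i ∈ [n], Σ_{j=1}^{n−1} v(D∧P_{i,j}) = v(D). In other words, the SA rank of the unary pigeonhole principle PHP^n_{n−1} with equalities is at least n−2. -/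
/-- A *term*: a partial assignment of Boolean values to variables (a conjunction of
literals in which no variable occurs both positively and negatively).
The empty term `⊤` is `fun _ => none`. -/
def SATerm (V : Type) := V → Option Bool

/-- Extend a term by the literal `x^b`. -/
def SATerm.extend {V : Type} [DecidableEq V] (D : SATerm V) (x : V) (b : Bool) :
    SATerm V := fun y => if y = x then some b else D y

/-- The value `v(D ∧ x^b)`, with the convention that it is `0` whenever `D` contains the
literal complementary to `x^b`. -/
def evalLit {V : Type} [DecidableEq V] (v : SATerm V → ℝ) (D : SATerm V)
    (x : V) (b : Bool) : ℝ :=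
  if D x = some (!b) then 0 else v (D.extend x b)

/-- The set of variables occurring in a term. -/
def SATerm.vars {V : Type} (D : SATerm V) : Set V := {x | D x ≠ none}

/-- The number of literals of a term. -/
noncomputable def SATerm.size {V : Type} (D : SATerm V) : ℕ := D.vars.ncard

open scoped Classical

namespace PHPSA

variable {n m : ℕ}

def Cons (T : SATerm (Fin n × Fin m)) (f : Fin n → Fin m) : Prop :=
  ∀ p b, T p = some b → (f p.1 = p.2 ↔ b = true)

noncomputable def pig (T : SATerm (Fin n × Fin m)) : Finset (Fin n) :=
  Finset.univ.filter fun i => ∃ j, T (i, j) ≠ none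

noncomputable def cnt (S : Finset (Fin n)) (T : SATerm (Fin n × Fin m)) : ℕ :=
  (Finset.univ.filter fun f : Fin n → Fin m => Set.InjOn f ↑S ∧ Cons T f).card

noncomputable def vS (S : Finset (Fin n)) (T : SATerm (Fin n × Fin m)) : ℝ :=
  (cnt S T : ℝ) / (cnt S (fun _ => none : SATerm (Fin n × Fin m)) : ℝ)

noncomputable def vv (T : SATerm (Fin n × Fin m)) : ℝ := vS (pig T) T

lemma mem_pig {T : SATerm (Fin n × Fin m)} {i : Fin n} :
    i ∈ pig T ↔ ∃ j, T (i, j) ≠ none := by simp [pig]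

lemma pig_top : pig (n := n) (m := m) (fun _ => none) = ∅ := by
  ext i; simp [pig]

lemma fst_mem_pig {T : SATerm (Fin n × Fin m)} {p : Fin n × Fin m} {b : Bool}
    (h : T p = some b) : p.1 ∈ pig T := by
  refine mem_pig.2 ⟨p.2, ?_⟩
  show T p ≠ none
  simp [h]

lemma cons_congr {T : SATerm (Fin n × Fin m)} {f g : Fin n → Fin m}
    (h : ∀ i ∈ pig T, f i = g i) : Cons T f ↔ Cons T g := by
  constructor <;> intro hc p b hp
  · rw [← h p.1 (fst_mem_pig hp)]; exact hc p b hp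
  · rw [h p.1 (fst_mem_pig hp)]; exact hc p b hp

lemma pig_extend (D : SATerm (Fin n × Fin m)) (x : Fin n × Fin m) (b : Bool) :
    pig (D.extend x b) = insert x.1 (pig D) := by
  ext i
  simp only [mem_pig, Finset.mem_insert, SATerm.extend]
  constructor
  · rintro ⟨j, hj⟩
    by_cases h : (i, j) = x
    · exact Or.inl (by rw [← h])
    · exact Or.inr ⟨j, by rwa [if_neg h] at hj⟩
  · rintro (h | ⟨j, hj⟩)
    · exact ⟨x.2, by rw [if_pos (by rw [h])]; simp⟩
    · refine ⟨j, ?_⟩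
      by_cases h : (i, j) = x
      · rw [if_pos h]; simp
      · rwa [if_neg h]

lemma cons_extend_of {D : SATerm (Fin n × Fin m)} {x : Fin n × Fin m} {b : Bool}
    {f : Fin n → Fin m} (hc : Cons D f) (hb : f x.1 = x.2 ↔ b = true) :
    Cons (D.extend x b) f := by
  intro p c hp
  simp only [SATerm.extend] at hp
  by_cases h : p = x
  · rw [if_pos h] at hp
    obtain rfl : b = c := by injection hp
    rw [h]; exact hb
  · rw [if_neg h] at hp
    exact hc p c hp

lemma cons_extend_iff {D : SATerm (Fin n × Fin m)} {x : Fin n × Fin m} {b : Bool}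
    {f : Fin n → Fin m} (hx : D x ≠ some (!b)) :
    Cons (D.extend x b) f ↔ Cons D f ∧ (f x.1 = x.2 ↔ b = true) := by
  constructor
  · intro hc
    constructor
    · intro p c hp
      by_cases h : p = x
      · subst h
        have hcb : c = b := by cases c <;> cases b <;> simp_all
        subst hcb
        exact hc p c (by simp [SATerm.extend])
      · exact hc p c (by simp [SATerm.extend, if_neg h, hp])
    · exact hc x b (by simp [SATerm.extend])
  · rintro ⟨hc, hb⟩; exact cons_extend_of hc hb

lemma extend_eq_self {D : SATerm (Fin n × Fin m)} {x : Fin n × Fin m} {b : Bool}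
    (h : D x = some b) : D.extend x b = D := by
  funext y
  simp only [SATerm.extend]
  by_cases hy : y = x
  · rw [if_pos hy, hy, h]
  · rw [if_neg hy]

lemma cnt_mono {S : Finset (Fin n)} {T₁ T₂ : SATerm (Fin n × Fin m)}
    (h : ∀ f : Fin n → Fin m, Set.InjOn f ↑S → Cons T₁ f → Cons T₂ f) :
    cnt S T₁ ≤ cnt S T₂ := by
  apply Finset.card_le_card
  intro f hf
  simp only [Finset.mem_filter, Finset.mem_univ, true_and] at hf ⊢
  exact ⟨hf.1, h f hf.1 hf.2⟩

lemma den_pos (hm : 0 < m) {S : Finset (Fin n)} (h : S.card ≤ m) :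
    0 < cnt S (fun _ => none : SATerm (Fin n × Fin m)) := by
  have hcard : Fintype.card S ≤ Fintype.card (Fin m) := by
    simpa using h
  obtain ⟨g⟩ := Function.Embedding.nonempty_of_card_le hcard
  refine Finset.card_pos.2 ⟨fun i => if hi : i ∈ S then g ⟨i, hi⟩ else ⟨0, hm⟩, ?_⟩
  simp only [Finset.mem_filter, Finset.mem_univ, true_and]
  constructor
  · intro a ha b hb hab
    simp only [Finset.mem_coe] at ha hb
    dsimp only at hab
    rw [dif_pos ha, dif_pos hb] at hab
    have := g.injective hab
    exact congrArg Subtype.val this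
  · intro p b hp; simp at hp

lemma pig_card_le_size (T : SATerm (Fin n × Fin m)) : (pig T).card ≤ T.size := by
  classical
  have h1 : T.size = T.vars.toFinset.card := Set.ncard_eq_toFinset_card' _
  have h2 : pig T ⊆ T.vars.toFinset.image Prod.fst := by
    intro i hi
    obtain ⟨j, hj⟩ := mem_pig.1 hi
    exact Finset.mem_image.2 ⟨(i, j), Set.mem_toFinset.2 hj, rfl⟩
  calc (pig T).card ≤ (T.vars.toFinset.image Prod.fst).card := Finset.card_le_card h2
    _ ≤ T.vars.toFinset.card := Finset.card_image_le
    _ = T.size := h1.symm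


lemma mul_cnt_insert {S : Finset (Fin n)} {T : SATerm (Fin n × Fin m)} {a : Fin n}
    (ha : a ∉ S) (hT : pig T ⊆ S) :
    m * cnt (insert a S) T = (m - S.card) * cnt S T := by
  classical
  set P : (Fin n → Fin m) → Prop := fun f => Set.InjOn f ↑S ∧ Cons T f with hP
  set P' : (Fin n → Fin m) → Prop := fun f => Set.InjOn f ↑(insert a S) ∧ Cons T f with hP'
  set s : Finset ((Fin n → Fin m) × Fin m) :=
    (Finset.univ.filter P') ×ˢ Finset.univ with hs_def
  set t : Finset ((Fin n → Fin m) × Fin m) :=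
    Finset.univ.filter (fun p => P p.1 ∧ ∀ u ∈ S, p.1 u ≠ p.2) with ht_def
  have hmem_s : ∀ p : (Fin n → Fin m) × Fin m, p ∈ s ↔ P' p.1 := by
    intro p; simp [hs_def, Finset.mem_product]
  have hmem_t : ∀ p : (Fin n → Fin m) × Fin m,
      p ∈ t ↔ P p.1 ∧ ∀ u ∈ S, p.1 u ≠ p.2 := by
    intro p; simp [ht_def]
  have hs : s.card = cnt (insert a S) T * m := by
    rw [hs_def, Finset.card_product, Finset.card_univ, Fintype.card_fin]
    rfl
  have ht : t.card = cnt S T * (m - S.card) := by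
    have h1 : t.card = ∑ f ∈ Finset.univ.filter P,
        (t.filter (fun p => p.1 = f)).card :=
      Finset.card_eq_sum_card_fiberwise (fun p hp => by
        simp only [Finset.mem_coe, Finset.mem_filter, Finset.mem_univ, true_and]
        exact ((hmem_t p).1 hp).1)
    have h2 : ∀ f ∈ Finset.univ.filter P,
        (t.filter (fun p => p.1 = f)).card = m - S.card := by
      intro f hf
      simp only [Finset.mem_filter, Finset.mem_univ, true_and] at hf
      have hfib : t.filter (fun p => p.1 = f)
          = {f} ×ˢ (Finset.univ \ S.image f) := by
        ext p
        rw [Finset.mem_filter, hmem_t p]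
        simp only [Finset.mem_product, Finset.mem_singleton, Finset.mem_sdiff,
          Finset.mem_univ, true_and, Finset.mem_image]
        constructor
        · rintro ⟨⟨_, hne⟩, rfl⟩
          exact ⟨rfl, fun ⟨u, hu, hfu⟩ => hne u hu hfu⟩
        · rintro ⟨rfl, hni⟩
          exact ⟨⟨hf, fun u hu hfu => hni ⟨u, hu, hfu⟩⟩, rfl⟩
      rw [hfib, Finset.card_product, Finset.card_singleton, one_mul,
        Finset.card_sdiff_of_subset (Finset.subset_univ _),
        Finset.card_image_of_injOn hf.1, Finset.card_univ, Fintype.card_fin]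
    rw [h1, Finset.sum_congr rfl h2, Finset.sum_const, smul_eq_mul]
    rfl
  have hcard : s.card = t.card := by
    apply Finset.card_nbij'
      (i := fun p => (Function.update p.1 a p.2, p.1 a))
      (j := fun p => (Function.update p.1 a p.2, p.1 a))
    · intro p hp
      obtain ⟨hinj, hcons⟩ := (hmem_s p).1 hp
      refine (hmem_t _).2 ⟨⟨?_, ?_⟩, ?_⟩
      · intro u hu v hv huv
        simp only [Finset.mem_coe] at hu hv
        have hua : u ≠ a := fun h => ha (h ▸ hu)
        have hva : v ≠ a := fun h => ha (h ▸ hv)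
        dsimp only at huv
        rw [Function.update_of_ne hua, Function.update_of_ne hva] at huv
        exact hinj (Finset.mem_coe.2 (Finset.mem_insert_of_mem hu))
          (Finset.mem_coe.2 (Finset.mem_insert_of_mem hv)) huv
      · show Cons T (Function.update p.1 a p.2)
        refine (cons_congr (fun i hi => ?_)).2 hcons
        have hia : i ≠ a := fun h => ha (h ▸ hT hi)
        exact Function.update_of_ne hia p.2 p.1
      · intro u hu
        dsimp only
        have hua : u ≠ a := fun h => ha (h ▸ hu)
        rw [Function.update_of_ne hua]
        intro hfu
        have := hinj (Finset.mem_coe.2 (Finset.mem_insert_of_mem hu))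
          (Finset.mem_coe.2 (Finset.mem_insert_self a S)) hfu
        exact hua this
    · intro p hp
      obtain ⟨⟨hinj, hcons⟩, hne⟩ := (hmem_t p).1 hp
      refine (hmem_s _).2 ⟨?_, ?_⟩
      · intro u hu v hv huv
        simp only [Finset.mem_coe, Finset.mem_insert] at hu hv
        dsimp only at huv
        rcases hu with rfl | hu <;> rcases hv with rfl | hv
        · rfl
        · have hva : v ≠ u := fun h => ha (h ▸ hv)
          rw [Function.update_self, Function.update_of_ne hva] at huv
          exact absurd huv.symm (hne v hv)
        · have hua : u ≠ v := fun h => ha (h ▸ hu)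
          rw [Function.update_of_ne hua, Function.update_self] at huv
          exact absurd huv (hne u hu)
        · have hua : u ≠ a := fun h => ha (h ▸ hu)
          have hva : v ≠ a := fun h => ha (h ▸ hv)
          rw [Function.update_of_ne hua, Function.update_of_ne hva] at huv
          exact hinj hu hv huv
      · show Cons T (Function.update p.1 a p.2)
        refine (cons_congr (fun i hi => ?_)).2 hcons
        have hia : i ≠ a := fun h => ha (h ▸ hT hi)
        exact Function.update_of_ne hia p.2 p.1
    · intro p hp
      dsimp only
      rw [Function.update_self]
      have hres : Function.update (Function.update p.1 a p.2) a (p.1 a) = p.1 := by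
        funext u
        by_cases h : u = a
        · subst h; rw [Function.update_self]
        · rw [Function.update_of_ne h, Function.update_of_ne h]
      rw [hres]
    · intro p hp
      dsimp only
      rw [Function.update_self]
      have hres : Function.update (Function.update p.1 a p.2) a (p.1 a) = p.1 := by
        funext u
        by_cases h : u = a
        · subst h; rw [Function.update_self]
        · rw [Function.update_of_ne h, Function.update_of_ne h]
      rw [hres]
  calc m * cnt (insert a S) T = s.card := by rw [hs, Nat.mul_comm]
    _ = t.card := hcard
    _ = (m - S.card) * cnt S T := by rw [ht, Nat.mul_comm]


lemma pig_top_subset (S : Finset (Fin n)) :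
    pig (n := n) (m := m) (fun _ => none) ⊆ S := by
  rw [pig_top]; exact Finset.empty_subset _

lemma vS_insert {S : Finset (Fin n)} {T : SATerm (Fin n × Fin m)} {a : Fin n}
    (hS : S.card < m) (ha : a ∉ S) (hT : pig T ⊆ S) :
    vS (insert a S) T = vS S T := by
  have hm : 0 < m := lt_of_le_of_lt (Nat.zero_le _) hS
  have h1 := mul_cnt_insert (m := m) ha hT
  have h2 := mul_cnt_insert (m := m) (T := (fun _ => none : SATerm (Fin n × Fin m))) ha
    (pig_top_subset S)
  have d1 : 0 < cnt S (fun _ => none : SATerm (Fin n × Fin m)) := den_pos hm hS.le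
  have d2 : 0 < cnt (insert a S) (fun _ => none : SATerm (Fin n × Fin m)) := by
    refine den_pos hm ?_
    rw [Finset.card_insert_of_notMem ha]
    omega
  rw [vS, vS, div_eq_div_iff (by exact_mod_cast d2.ne') (by exact_mod_cast d1.ne')]
  have key : cnt (insert a S) T * cnt S (fun _ => none : SATerm (Fin n × Fin m))
      = cnt S T * cnt (insert a S) (fun _ => none : SATerm (Fin n × Fin m)) := by
    have : m * (cnt (insert a S) T * cnt S (fun _ => none : SATerm (Fin n × Fin m)))
        = m * (cnt S T * cnt (insert a S) (fun _ => none : SATerm (Fin n × Fin m))) := by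
      calc m * (cnt (insert a S) T * cnt S (fun _ => none : SATerm (Fin n × Fin m)))
          = (m * cnt (insert a S) T) * cnt S (fun _ => none) := by ring
        _ = ((m - S.card) * cnt S T) * cnt S (fun _ => none) := by rw [h1]
        _ = cnt S T * ((m - S.card) * cnt S (fun _ => none)) := by ring
        _ = cnt S T * (m * cnt (insert a S) (fun _ => none)) := by rw [h2]
        _ = m * (cnt S T * cnt (insert a S) (fun _ => none)) := by ring
    exact Nat.eq_of_mul_eq_mul_left hm this
  exact_mod_cast key

lemma vS_subset {S₁ S₂ : Finset (Fin n)} {T : SATerm (Fin n × Fin m)}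
    (hT : pig T ⊆ S₁) (h12 : S₁ ⊆ S₂) (h2 : S₂.card ≤ m) :
    vS S₂ T = vS S₁ T := by
  obtain ⟨k, hk⟩ : ∃ k, S₂.card = S₁.card + k :=
    ⟨S₂.card - S₁.card, by
      have := Finset.card_le_card h12; omega⟩
  induction k generalizing S₂ with
  | zero =>
    have : S₁ = S₂ := Finset.eq_of_subset_of_card_le h12 (by omega)
    rw [this]
  | succ k ih =>
    have hss : S₁ ⊂ S₂ := Finset.ssubset_iff_subset_ne.2 ⟨h12, fun h => by
      rw [h] at hk; omega⟩
    obtain ⟨a, ha2, ha1⟩ := Finset.exists_of_ssubset hss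
    have hsub : S₁ ⊆ S₂.erase a := Finset.subset_erase.2 ⟨h12, ha1⟩
    have hins : insert a (S₂.erase a) = S₂ := Finset.insert_erase ha2
    have hcard : (S₂.erase a).card = S₂.card - 1 := Finset.card_erase_of_mem ha2
    have h1 : 1 ≤ S₂.card := Finset.card_pos.2 ⟨a, ha2⟩
    have hlt : (S₂.erase a).card < m := by omega
    calc vS S₂ T = vS (insert a (S₂.erase a)) T := by rw [hins]
      _ = vS (S₂.erase a) T :=
        vS_insert hlt (Finset.notMem_erase a S₂) (hT.trans hsub)
      _ = vS S₁ T := ih hsub (by omega) (by omega)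

lemma v_eq_vS {S : Finset (Fin n)} {T : SATerm (Fin n × Fin m)}
    (hT : pig T ⊆ S) (hS : S.card ≤ m) : vv T = vS S T :=
  (vS_subset (Finset.Subset.refl _) hT hS).symm

lemma vS_nonneg (S : Finset (Fin n)) (T : SATerm (Fin n × Fin m)) : 0 ≤ vS S T :=
  div_nonneg (Nat.cast_nonneg _) (Nat.cast_nonneg _)

lemma vv_nonneg (T : SATerm (Fin n × Fin m)) : 0 ≤ vv T := vS_nonneg _ _


lemma cnt_extend_true {S : Finset (Fin n)} {D : SATerm (Fin n × Fin m)}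
    {x : Fin n × Fin m} (hx : D x ≠ some false) :
    cnt S (D.extend x true) =
      ((Finset.univ.filter (fun f : Fin n → Fin m => Set.InjOn f ↑S ∧ Cons D f)).filter
        (fun f => f x.1 = x.2)).card := by
  rw [cnt, Finset.filter_filter]
  apply congrArg Finset.card
  ext f
  simp only [Finset.mem_filter, Finset.mem_univ, true_and]
  rw [cons_extend_iff (b := true) (by simpa using hx)]
  tauto

lemma cnt_extend_false {S : Finset (Fin n)} {D : SATerm (Fin n × Fin m)}
    {x : Fin n × Fin m} (hx : D x ≠ some true) :
    cnt S (D.extend x false) =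
      ((Finset.univ.filter (fun f : Fin n → Fin m => Set.InjOn f ↑S ∧ Cons D f)).filter
        (fun f => ¬ f x.1 = x.2)).card := by
  rw [cnt, Finset.filter_filter]
  apply congrArg Finset.card
  ext f
  simp only [Finset.mem_filter, Finset.mem_univ, true_and]
  rw [cons_extend_iff (b := false) (by simpa using hx)]
  simp only [Bool.false_eq_true, iff_false]
  tauto

end PHPSA

open PHPSA in
private theorem PHPeq_SA_rank_lower_bound_aux (n : ℕ) (hn : 3 ≤ n) :
    ∃ v : SATerm (Fin n × Fin (n - 1)) → ℝ,
      v (fun _ => none) = 1 ∧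
      ∀ D : SATerm (Fin n × Fin (n - 1)), D.size ≤ n - 3 →
        (∀ x, D x = none → v (D.extend x true) + v (D.extend x false) = v D) ∧
        (∀ x b, 0 ≤ evalLit v D x b ∧ evalLit v D x b ≤ v D) ∧
        (∀ (i i' : Fin n) (j : Fin (n - 1)), i ≠ i' →
          v D ≤ evalLit v D (i, j) false + evalLit v D (i', j) false) ∧
        (∀ i : Fin n, ∑ j : Fin (n - 1), evalLit v D (i, j) true = v D) := by
  classical
  set m := n - 1 with hm_def
  have hm : 0 < m := by omega
  refine ⟨vv, ?_, ?_⟩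
  · -- v(⊤) = 1
    have h0 : pig (n := n) (m := m) (fun _ => none) = ∅ := pig_top
    have hpos : 0 < cnt (∅ : Finset (Fin n)) (fun _ => none : SATerm (Fin n × Fin m)) :=
      den_pos hm (by simp)
    show vS (pig (fun _ => none : SATerm (Fin n × Fin m))) (fun _ => none) = 1
    rw [h0]
    show (cnt (∅ : Finset (Fin n)) (fun _ => none : SATerm (Fin n × Fin m)) : ℝ) /
      (cnt (∅ : Finset (Fin n)) (fun _ => none : SATerm (Fin n × Fin m)) : ℝ) = 1
    rw [div_self (by exact_mod_cast hpos.ne')]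
  intro D hD
  have hc : (pig D).card ≤ n - 3 := le_trans (pig_card_le_size D) hD
  refine ⟨?_, ?_, ?_, ?_⟩
  · -- (i) negation equalities
    intro x hx
    set S : Finset (Fin n) := insert x.1 (pig D) with hS_def
    have hScard : S.card ≤ m := by
      rw [hS_def]
      have := Finset.card_insert_le x.1 (pig D); omega
    have hden : 0 < cnt S (fun _ => none : SATerm (Fin n × Fin m)) := den_pos hm hScard
    have hvt : vv (D.extend x true) = vS S (D.extend x true) :=
      v_eq_vS (by rw [pig_extend]) hScard
    have hvf : vv (D.extend x false) = vS S (D.extend x false) :=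
      v_eq_vS (by rw [pig_extend]) hScard
    have hvD : vv D = vS S D := v_eq_vS (Finset.subset_insert _ _) hScard
    rw [hvt, hvf, hvD, vS, vS, vS, ← add_div]
    congr 1
    have hxt : D x ≠ some false := by rw [hx]; simp
    have hxf : D x ≠ some true := by rw [hx]; simp
    rw [cnt_extend_true hxt, cnt_extend_false hxf]
    rw [← Nat.cast_add]
    congr 1
    exact Finset.card_filter_add_card_filter_not _
  · -- (ii) bounds
    intro x b
    rcases hDx : D x with _ | c
    · -- D x = none
      have hne : D x ≠ some (!b) := by rw [hDx]; simp
      rw [evalLit, if_neg hne]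
      refine ⟨vv_nonneg _, ?_⟩
      set S : Finset (Fin n) := insert x.1 (pig D) with hS_def
      have hScard : S.card ≤ m := by
        rw [hS_def]
        have := Finset.card_insert_le x.1 (pig D); omega
      have hden : 0 < cnt S (fun _ => none : SATerm (Fin n × Fin m)) := den_pos hm hScard
      have hve : vv (D.extend x b) = vS S (D.extend x b) :=
        v_eq_vS (by rw [pig_extend]) hScard
      have hvD : vv D = vS S D := v_eq_vS (Finset.subset_insert _ _) hScard
      rw [hve, hvD, vS, vS]
      have hmono : cnt S (D.extend x b) ≤ cnt S D := by
        refine cnt_mono (fun f _ hcons => ?_)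
        exact ((cons_extend_iff (by rw [hDx]; simp)).1 hcons).1
      gcongr
      all_goals exact_mod_cast hmono
    · by_cases hcb : c = b
      · -- D x = some b : extension is D itself
        subst hcb
        have hne : D x ≠ some (!c) := by rw [hDx]; simp
        rw [evalLit, if_neg hne, extend_eq_self hDx]
        exact ⟨vv_nonneg _, le_refl _⟩
      · -- D x = some (!b) : evalLit = 0
        have heq : D x = some (!b) := by
          rw [hDx]; cases b <;> cases c <;> simp_all
        rw [evalLit, if_pos heq]
        exact ⟨le_refl _, vv_nonneg _⟩
  · -- (iii) hole axioms
    intro i i' j hne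
    set S : Finset (Fin n) := insert i (insert i' (pig D)) with hS_def
    have hScard : S.card ≤ m := by
      rw [hS_def]
      have h1 := Finset.card_insert_le i' (pig D)
      have h2 := Finset.card_insert_le i (insert i' (pig D))
      omega
    have hden : 0 < cnt S (fun _ => none : SATerm (Fin n × Fin m)) := den_pos hm hScard
    have hiS : (i : Fin n) ∈ S := Finset.mem_insert_self _ _
    have hi'S : (i' : Fin n) ∈ S := Finset.mem_insert_of_mem (Finset.mem_insert_self _ _)
    have hpigS : pig D ⊆ S :=
      (Finset.subset_insert _ _).trans (Finset.subset_insert _ _)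
    have hvD : vv D = vS S D := v_eq_vS hpigS hScard
    have hvA : vv (D.extend (i, j) false) = vS S (D.extend (i, j) false) := by
      refine v_eq_vS ?_ hScard
      rw [pig_extend]
      exact Finset.insert_subset_iff.2 ⟨hiS, hpigS⟩
    have hvB : vv (D.extend (i', j) false) = vS S (D.extend (i', j) false) := by
      refine v_eq_vS ?_ hScard
      rw [pig_extend]
      exact Finset.insert_subset_iff.2 ⟨hi'S, hpigS⟩
    by_cases h1 : D (i, j) = some true <;> by_cases h2 : D (i', j) = some true
    · -- both forced: cnt S D = 0
      rw [evalLit, if_pos (by simpa using h1), evalLit, if_pos (by simpa using h2)]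
      have hzero : cnt S D = 0 := by
        rw [cnt, Finset.card_eq_zero, Finset.filter_eq_empty_iff]
        rintro f -
        rintro ⟨hinj, hcons⟩
        have e1 : f i = j := (hcons (i, j) true h1).2 rfl
        have e2 : f i' = j := (hcons (i', j) true h2).2 rfl
        exact hne (hinj hiS hi'S (e1.trans e2.symm))
      rw [hvD, vS, hzero]
      norm_num
    · rw [evalLit, if_pos (by simpa using h1), evalLit, if_neg (by simpa using h2)]
      have hmono : cnt S D ≤ cnt S (D.extend (i', j) false) := by
        refine cnt_mono (fun f hinj hcons => ?_)
        refine cons_extend_of hcons ?_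
        simp only [Bool.false_eq_true, iff_false]
        intro hfij
        have e1 : f i = j := (hcons (i, j) true h1).2 rfl
        exact hne (hinj hiS hi'S (e1.trans hfij.symm))
      rw [hvD, hvB, vS, vS]
      have : (cnt S D : ℝ) / cnt S (fun _ => none : SATerm (Fin n × Fin m))
          ≤ (cnt S (D.extend (i', j) false) : ℝ) /
            cnt S (fun _ => none : SATerm (Fin n × Fin m)) := by
        gcongr
        all_goals exact_mod_cast hmono
      linarith
    · rw [evalLit, if_neg (by simpa using h1), evalLit, if_pos (by simpa using h2)]
      have hmono : cnt S D ≤ cnt S (D.extend (i, j) false) := by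
        refine cnt_mono (fun f hinj hcons => ?_)
        refine cons_extend_of hcons ?_
        simp only [Bool.false_eq_true, iff_false]
        intro hfij
        have e2 : f i' = j := (hcons (i', j) true h2).2 rfl
        exact hne (hinj hiS hi'S (hfij.trans e2.symm))
      rw [hvD, hvA, vS, vS]
      have : (cnt S D : ℝ) / cnt S (fun _ => none : SATerm (Fin n × Fin m))
          ≤ (cnt S (D.extend (i, j) false) : ℝ) /
            cnt S (fun _ => none : SATerm (Fin n × Fin m)) := by
        gcongr
        all_goals exact_mod_cast hmono
      linarith
    · rw [evalLit, if_neg (by simpa using h1), evalLit, if_neg (by simpa using h2)]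
      have hkey : cnt S D ≤ cnt S (D.extend (i, j) false) + cnt S (D.extend (i', j) false) := by
        have hsub : (Finset.univ.filter
              (fun f : Fin n → Fin m => Set.InjOn f ↑S ∧ Cons D f)) ⊆
            (Finset.univ.filter
              (fun f : Fin n → Fin m => Set.InjOn f ↑S ∧ Cons (D.extend (i, j) false) f)) ∪
            (Finset.univ.filter
              (fun f : Fin n → Fin m => Set.InjOn f ↑S ∧ Cons (D.extend (i', j) false) f)) := by
          intro f hf
          simp only [Finset.mem_filter, Finset.mem_univ, true_and, Finset.mem_union] at hf ⊢
          obtain ⟨hinj, hcons⟩ := hf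
          by_cases hfij : f i = j
          · refine Or.inr ⟨hinj, cons_extend_of hcons ?_⟩
            simp only [Bool.false_eq_true, iff_false]
            intro hfij'
            exact hne (hinj hiS hi'S (hfij.trans hfij'.symm))
          · exact Or.inl ⟨hinj, cons_extend_of hcons (by simpa using hfij)⟩
        calc cnt S D ≤ _ := Finset.card_le_card hsub
          _ ≤ _ := Finset.card_union_le _ _
      rw [hvD, hvA, hvB, vS, vS, vS, ← add_div]
      gcongr
      all_goals exact_mod_cast hkey
  · -- (iv) pigeon equalities
    intro i
    set S : Finset (Fin n) := insert i (pig D) with hS_def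
    have hScard : S.card ≤ m := by
      rw [hS_def]
      have := Finset.card_insert_le i (pig D); omega
    have hden : 0 < cnt S (fun _ => none : SATerm (Fin n × Fin m)) := den_pos hm hScard
    have hvD : vv D = vS S D := v_eq_vS (Finset.subset_insert _ _) hScard
    set A : (Fin n → Fin m) → Prop := fun f => Set.InjOn f ↑S ∧ Cons D f with hA_def
    have hfib : ∀ j : Fin m, evalLit vv D (i, j) true =
        (((Finset.univ.filter A).filter (fun f => f i = j)).card : ℝ) /
          (cnt S (fun _ => none : SATerm (Fin n × Fin m)) : ℝ) := by
      intro j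
      rcases hDj : D (i, j) with _ | c
      · -- none
        rw [evalLit, if_neg (by rw [hDj]; simp)]
        have hve : vv (D.extend (i, j) true) = vS S (D.extend (i, j) true) :=
          v_eq_vS (by rw [pig_extend]) hScard
        rw [hve, vS, cnt_extend_true (by rw [hDj]; simp)]
      · cases c
        · -- some false
          rw [evalLit, if_pos (by rw [hDj]; simp)]
          have hempty : ((Finset.univ.filter A).filter (fun f => f i = j)) = ∅ := by
            rw [Finset.filter_eq_empty_iff]
            intro f hf
            simp only [hA_def, Finset.mem_filter, Finset.mem_univ, true_and] at hf
            have := (hf.2 (i, j) false hDj)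
            simp only [Bool.false_eq_true, iff_false] at this
            exact this
          rw [hempty]
          simp
        · -- some true
          rw [evalLit, if_neg (by rw [hDj]; simp), extend_eq_self hDj, hvD, vS]
          have hself : ((Finset.univ.filter A).filter (fun f => f i = j))
              = Finset.univ.filter A := by
            rw [Finset.filter_eq_self]
            intro f hf
            simp only [hA_def, Finset.mem_filter, Finset.mem_univ, true_and] at hf
            exact (hf.2 (i, j) true hDj).2 rfl
          rw [hself]
          rfl
    rw [Finset.sum_congr rfl (fun j _ => hfib j), ← Finset.sum_div, hvD, vS]
    congr 1
    rw [← Nat.cast_sum]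
    congr 1
    exact (Finset.card_eq_sum_card_fiberwise
      (f := fun f : Fin n → Fin m => f i) (t := Finset.univ)
      (fun f _ => Finset.mem_univ _)).symm

/-- The SA rank of the unary pigeonhole principle `PHP^n_{n−1}` with equalities is at
least `n−2`: there is a function `v` on terms over the variables `P_{i,j}`
(`i ∈ [n]`, `j ∈ [n−1]`) with `v(⊤) = 1` satisfying, for every term `D` of at most
`n−3` literals, the lifted negation equalities, bounding inequalities, hole axioms
`¬P_{i,j} ∨ ¬P_{i',j}`, and pigeon equalities `Σ_j P_{i,j} = 1`. -/
theorem PHPeq_SA_rank_lower_bound (n : ℕ) (hn : 3 ≤ n) :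
    ∃ v : SATerm (Fin n × Fin (n - 1)) → ℝ,
      v (fun _ => none) = 1 ∧
      ∀ D : SATerm (Fin n × Fin (n - 1)), D.size ≤ n - 3 →
        (∀ x, D x = none → v (D.extend x true) + v (D.extend x false) = v D) ∧
        (∀ x b, 0 ≤ evalLit v D x b ∧ evalLit v D x b ≤ v D) ∧
        (∀ (i i' : Fin n) (j : Fin (n - 1)), i ≠ i' →
          v D ≤ evalLit v D (i, j) false + evalLit v D (i', j) false) ∧
        (∀ i : Fin n, ∑ j : Fin (n - 1), evalLit v D (i, j) true = v D) := by
  exact PHPeq_SA_rank_lower_bound_aux n hn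
end
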